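/- The bound in the Laplacian stability lemma is tight: for every ν ≥ 1 and every ε > 0, there exist weighted graphs W and W̃ on 4 vertices with ν(W,W̃) = ν such that λ_{↑2}(LAP(W̃)) ≥ (ν − ε)·λ_{↑2}(LAP(W)). Concretely, for the path graph on vertices 1,2,3,4 with W having edge weights x, 1, x and W̃ having weights x/ν, 1, x/ν, one has λ_{↑2}(LAP(W)) = 1/(1+x) and λ_{↑2}(LAP(W̃))/λ_{↑2}(LAP(W)) = ν(1+x)/(ν+x), which tends to ν as x → ∞. -/

import Mathlib

open Matrix Finset

/-- The normalized Laplacian `I - a⁻¹ A a⁻¹` where `a` is the diagonal matrix with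
`a_{ii} = sqrt (Σ_j A_{ij})`. -/
noncomputable def normLap {n : ℕ} (A : Matrix (Fin n) (Fin n) ℝ) : Matrix (Fin n) (Fin n) ℝ :=
  1 - Matrix.of fun i j => A i j / (Real.sqrt (∑ k, A i k) * Real.sqrt (∑ k, A j k))

/-- The second-smallest eigenvalue of the normalized Laplacian of `A`, characterized
variationally as the infimum of the Rayleigh quotient over nonzero vectors orthogonal to
the kernel vector `(sqrt (Σ_j A_{ij}))_i`. -/
noncomputable def lambdaUp2 {n : ℕ} (A : Matrix (Fin n) (Fin n) ℝ) : ℝ :=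
  sInf {r : ℝ | ∃ x : Fin n → ℝ, x ≠ 0 ∧ (∑ i, x i * Real.sqrt (∑ k, A i k)) = 0 ∧
    r = (∑ i, ∑ j, x i * normLap A i j * x j) / (∑ i, x i ^ 2)}

/-- The weighted path graph on 4 vertices with edge weights `x, 1, x`. -/
noncomputable def pathW (x : ℝ) : Matrix (Fin 4) (Fin 4) ℝ :=
  Matrix.of fun i j =>
    if (i = 0 ∧ j = 1) ∨ (i = 1 ∧ j = 0) then x
    else if (i = 1 ∧ j = 2) ∨ (i = 2 ∧ j = 1) then 1
    else if (i = 2 ∧ j = 3) ∨ (i = 3 ∧ j = 2) then x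
    else 0

/-- ratio with the convention that `0/0 = 1`. -/
noncomputable def ratio01 (a b : ℝ) : ℝ := if a = 0 ∧ b = 0 then 1 else a / b

/-- `ν(W, W̃)`: the product of the two maximal entrywise ratios. -/
noncomputable def nuOf {n : ℕ} [NeZero n] (W Wt : Matrix (Fin n) (Fin n) ℝ) : ℝ :=
  (Finset.univ.sup' ⟨(0, 0), Finset.mem_univ _⟩ fun p : Fin n × Fin n =>
      ratio01 (W p.1 p.2) (Wt p.1 p.2)) *
  (Finset.univ.sup' ⟨(0, 0), Finset.mem_univ _⟩ fun p : Fin n × Fin n =>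
      ratio01 (Wt p.1 p.2) (W p.1 p.2))

private lemma pathW_rowsum0 (x : ℝ) : ∑ k, pathW x 0 k = x := by
  simp [pathW, Fin.sum_univ_four]
private lemma pathW_rowsum1 (x : ℝ) : ∑ k, pathW x 1 k = x + 1 := by
  simp [pathW, Fin.sum_univ_four]
private lemma pathW_rowsum2 (x : ℝ) : ∑ k, pathW x 2 k = x + 1 := by
  simp [pathW, Fin.sum_univ_four]; ring
private lemma pathW_rowsum3 (x : ℝ) : ∑ k, pathW x 3 k = x := by
  simp [pathW, Fin.sum_univ_four]

private lemma normLap_pathW (x : ℝ) (hx : 0 < x) :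
    normLap (pathW x) = Matrix.of
      ![![1, -(Real.sqrt x / Real.sqrt (x+1)), 0, 0],
        ![-(Real.sqrt x / Real.sqrt (x+1)), 1, -(1/(x+1)), 0],
        ![0, -(1/(x+1)), 1, -(Real.sqrt x / Real.sqrt (x+1))],
        ![0, 0, -(Real.sqrt x / Real.sqrt (x+1)), 1]] := by
  have hx1 : (0:ℝ) < x + 1 := by linarith
  have hu : Real.sqrt x * Real.sqrt x = x := Real.mul_self_sqrt hx.le
  have ht : Real.sqrt (x+1) * Real.sqrt (x+1) = x + 1 := Real.mul_self_sqrt hx1.le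
  have hu0 : 0 < Real.sqrt x := Real.sqrt_pos.mpr hx
  have ht0 : 0 < Real.sqrt (x+1) := Real.sqrt_pos.mpr hx1
  have h1x : (1:ℝ) + x = x + 1 := by ring
  ext i j
  fin_cases i <;> fin_cases j <;>
    simp [normLap, pathW, Fin.sum_univ_four, Matrix.one_apply, h1x, Matrix.vecHead,
      Matrix.vecTail] <;>
    (try field_simp) <;>
    first
      | linarith [ht]
      | nlinarith [hu, ht, hu0, ht0, mul_pos hu0 ht0, sq_nonneg (Real.sqrt x)]

private lemma qform_pathW (x : ℝ) (hx : 0 < x) (v : Fin 4 → ℝ) :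
    (∑ i, ∑ j, v i * normLap (pathW x) i j * v j) =
      (v 0 ^ 2 + v 1 ^ 2 + v 2 ^ 2 + v 3 ^ 2)
        - 2 * (Real.sqrt x / Real.sqrt (x+1)) * (v 0 * v 1 + v 2 * v 3)
        - (2 / (x + 1)) * (v 1 * v 2) := by
  rw [normLap_pathW x hx]
  simp [Fin.sum_univ_four, Matrix.vecHead, Matrix.vecTail]
  ring

private lemma con_pathW (x : ℝ) (v : Fin 4 → ℝ) :
    (∑ i, v i * Real.sqrt (∑ k, pathW x i k)) =
      v 0 * Real.sqrt x + v 1 * Real.sqrt (x+1) + v 2 * Real.sqrt (x+1)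
        + v 3 * Real.sqrt x := by
  rw [Fin.sum_univ_four, pathW_rowsum0, pathW_rowsum1, pathW_rowsum2, pathW_rowsum3]

set_option maxHeartbeats 1000000 in
lemma lambdaUp2_pathW (x : ℝ) (hx : 0 < x) : lambdaUp2 (pathW x) = 1 / (1 + x) := by
  have hx1 : (0:ℝ) < x + 1 := by linarith
  have hQ := qform_pathW x hx
  have hCon := con_pathW x
  set u := Real.sqrt x with hu_def
  set t := Real.sqrt (x + 1) with ht_def
  have hu : u * u = x := Real.mul_self_sqrt hx.le
  have ht : t * t = x + 1 := Real.mul_self_sqrt hx1.le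
  have hu0 : 0 < u := Real.sqrt_pos.mpr hx
  have ht0 : 0 < t := Real.sqrt_pos.mpr hx1
  have htu : t ^ 2 = 1 + u ^ 2 := by linear_combination ht - hu
  have h1x : (1:ℝ) + x = x + 1 := by ring
  have hsum : ∀ v : Fin 4 → ℝ, (∑ i, v i ^ 2) = v 0 ^ 2 + v 1 ^ 2 + v 2 ^ 2 + v 3 ^ 2 :=
    fun v => Fin.sum_univ_four _
  -- lower bound
  have hlb : ∀ r ∈ {r : ℝ | ∃ v : Fin 4 → ℝ, v ≠ 0 ∧
      (∑ i, v i * Real.sqrt (∑ k, pathW x i k)) = 0 ∧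
      r = (∑ i, ∑ j, v i * normLap (pathW x) i j * v j) / (∑ i, v i ^ 2)},
      1 / (x + 1) ≤ r := by
    rintro r ⟨v, hv0, hvc, rfl⟩
    have hSv : 0 < ∑ i, v i ^ 2 := by
      obtain ⟨i, hi⟩ := Function.ne_iff.mp hv0
      exact Finset.sum_pos' (fun j _ => sq_nonneg _)
        ⟨i, Finset.mem_univ i, lt_of_le_of_ne (sq_nonneg _) (Ne.symm (pow_ne_zero 2 hi))⟩
    rw [le_div_iff₀ hSv, hQ, hsum]
    rw [hCon] at hvc
    have hC : u * (v 0 + v 3) + t * (v 1 + v 2) = 0 := by linear_combination hvc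
    set S := v 0 ^ 2 + v 1 ^ 2 + v 2 ^ 2 + v 3 ^ 2 with hS_def
    have iden : 2 * (2 * t ^ 2 - 1) *
        (t ^ 2 * S - 2 * u * t * (v 0 * v 1 + v 2 * v 3) - 2 * (v 1 * v 2) - S)
        = 2 * u ^ 2 * (t * (v 0 + v 3) - u * (v 1 + v 2)) ^ 2
          + (2 * t ^ 2 - 1) * (u * (v 0 - v 3) - t * (v 1 - v 2)) ^ 2
          - (u * (v 0 + v 3) + t * (v 1 + v 2)) ^ 2 := by
      rw [hS_def]
      linear_combination ((-2) * v 3 ^ 2 + (-2) * v 2 ^ 2 + (-4) * (v 1 * v 2)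
        + (-2) * v 1 ^ 2 + (-2) * v 0 ^ 2 + 4 * t ^ 2 * v 3 ^ 2 + 2 * t ^ 2 * v 2 ^ 2
        + 4 * t ^ 2 * (v 1 * v 2) + 2 * t ^ 2 * v 1 ^ 2 + 4 * t ^ 2 * v 0 ^ 2
        + (-4) * (u * t * (v 2 * v 3)) + (-4) * (u * t * (v 1 * v 3))
        + (-4) * (u * t * (v 0 * v 2)) + (-4) * (u * t * (v 0 * v 1))
        + 2 * u ^ 2 * v 2 ^ 2 + 4 * u ^ 2 * (v 1 * v 2) + 2 * u ^ 2 * v 1 ^ 2) * htu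
    have hC2 : (u * (v 0 + v 3) + t * (v 1 + v 2)) ^ 2 = 0 := by rw [hC]; ring
    have h2t : (0:ℝ) < 2 * t ^ 2 - 1 := by nlinarith [ht]
    have hN : 0 ≤ 2 * (2 * t ^ 2 - 1) *
        (t ^ 2 * S - 2 * u * t * (v 0 * v 1 + v 2 * v 3) - 2 * (v 1 * v 2) - S) := by
      rw [iden, hC2]
      have g1 : (0:ℝ) ≤ 2 * u ^ 2 * (t * (v 0 + v 3) - u * (v 1 + v 2)) ^ 2 := by positivity
      have g2 : (0:ℝ) ≤ (2 * t ^ 2 - 1) * (u * (v 0 - v 3) - t * (v 1 - v 2)) ^ 2 :=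
        mul_nonneg h2t.le (sq_nonneg _)
      linarith
    have h2 : 0 ≤ t ^ 2 * S - 2 * u * t * (v 0 * v 1 + v 2 * v 3) - 2 * (v 1 * v 2) - S := by
      nlinarith [hN, h2t]
    have hteq : x + 1 = t ^ 2 := by rw [sq]; exact ht.symm
    rw [hteq]
    have expand : S - 2 * (u / t) * (v 0 * v 1 + v 2 * v 3) - 2 / t ^ 2 * (v 1 * v 2)
        - 1 / t ^ 2 * S
        = (t ^ 2 * S - 2 * u * t * (v 0 * v 1 + v 2 * v 3) - 2 * (v 1 * v 2) - S) / t ^ 2 := by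
      field_simp
    have h3 := div_nonneg h2 (sq_nonneg t)
    linarith [expand ▸ h3]
  -- membership
  have hmem : 1 / (x + 1) ∈ {r : ℝ | ∃ v : Fin 4 → ℝ, v ≠ 0 ∧
      (∑ i, v i * Real.sqrt (∑ k, pathW x i k)) = 0 ∧
      r = (∑ i, ∑ j, v i * normLap (pathW x) i j * v j) / (∑ i, v i ^ 2)} := by
    refine ⟨![u * t, x, -x, -(u * t)], ?_, ?_, ?_⟩
    · intro h
      have h0 := congrFun h 0
      simp at h0
      rcases h0 with h0 | h0
      · exact hu0.ne' h0
      · exact ht0.ne' h0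
    · rw [hCon]
      simp [Matrix.vecHead, Matrix.vecTail]
      try ring
    · rw [hQ, hsum]
      simp only [Matrix.cons_val_zero, Matrix.cons_val_one, Matrix.head_cons,
        Matrix.cons_val_two, Matrix.tail_cons, Matrix.cons_val_three]
      have hden : (0:ℝ) < (u * t) ^ 2 + x ^ 2 + (-x) ^ 2 + (-(u * t)) ^ 2 := by positivity
      rw [eq_div_iff hden.ne']
      field_simp
      linear_combination (-2*x*t^2 + 4*x*(x+1)) * hu - 2*x^2 * ht
  show sInf _ = 1 / (1 + x)
  rw [h1x]
  exact le_antisymm (csInf_le ⟨1 / (x + 1), hlb⟩ hmem) (le_csInf ⟨_, hmem⟩ hlb)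


theorem laplacian_stability_tight :
    (∀ ν : ℝ, 1 ≤ ν → ∀ ε : ℝ, 0 < ε → ∃ x : ℝ, 0 < x ∧
      nuOf (pathW x) (pathW (x / ν)) = ν ∧
      lambdaUp2 (pathW (x / ν)) ≥ (ν - ε) * lambdaUp2 (pathW x)) ∧
    (∀ ν : ℝ, 1 ≤ ν → ∀ x : ℝ, 0 < x →
      lambdaUp2 (pathW x) = 1 / (1 + x) ∧
      lambdaUp2 (pathW (x / ν)) / lambdaUp2 (pathW x) = ν * (1 + x) / (ν + x)) ∧
    (∀ ν : ℝ, 1 ≤ ν →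
      Filter.Tendsto (fun x : ℝ => ν * (1 + x) / (ν + x)) Filter.atTop (nhds ν)) := by
  have hnu : ∀ ν : ℝ, 1 ≤ ν → ∀ x : ℝ, 0 < x → nuOf (pathW x) (pathW (x / ν)) = ν := by
    intro ν hν x hx
    have hν0 : (0:ℝ) < ν := lt_of_lt_of_le one_pos hν
    have hxν : 0 < x / ν := div_pos hx hν0
    have hkey : x / (x / ν) = ν := by
      rw [eq_comm, eq_div_iff hxν.ne']
      field_simp
    have hkey2 : x / ν / x = 1 / ν := by
      rw [div_div, eq_comm, div_eq_div_iff (by positivity) (by positivity : ν * x ≠ 0)]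
      ring
    have hkey2' : (1:ℝ) / ν ≤ 1 := by
      rw [div_le_one hν0]; exact hν
    have e1 : pathW x 0 1 = x := by simp [pathW]
    have e1' : pathW (x / ν) 0 1 = x / ν := by simp [pathW]
    have e2 : pathW (x / ν) 1 2 = 1 := by simp [pathW]
    have e2' : pathW x 1 2 = 1 := by simp [pathW]
    have hsup1 : (Finset.univ.sup' ⟨(0, 0), Finset.mem_univ _⟩
        fun p : Fin 4 × Fin 4 => ratio01 (pathW x p.1 p.2) (pathW (x / ν) p.1 p.2)) = ν := by
      apply le_antisymm
      · apply Finset.sup'_le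
        rintro ⟨i, j⟩ -
        fin_cases i <;> fin_cases j <;>
          simp [pathW, ratio01, hx.ne', hxν.ne'] <;>
          linarith [hkey, hν]
      · refine le_trans (le_of_eq ?_)
          (Finset.le_sup' _ (Finset.mem_univ ((0 : Fin 4), (1 : Fin 4))))
        simp only [e1, e1', ratio01, hx.ne', false_and, if_false]
        exact hkey.symm
    have hsup2 : (Finset.univ.sup' ⟨(0, 0), Finset.mem_univ _⟩
        fun p : Fin 4 × Fin 4 => ratio01 (pathW (x / ν) p.1 p.2) (pathW x p.1 p.2)) = 1 := by
      apply le_antisymm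
      · apply Finset.sup'_le
        rintro ⟨i, j⟩ -
        fin_cases i <;> fin_cases j <;>
          simp [pathW, ratio01, hx.ne', hxν.ne'] <;>
          linarith [hkey2, hkey2']
      · refine le_trans (le_of_eq ?_)
          (Finset.le_sup' _ (Finset.mem_univ ((1 : Fin 4), (2 : Fin 4))))
        simp [e2, e2', ratio01]
    unfold nuOf
    rw [hsup1, hsup2, mul_one]
  have key2 : ∀ ν : ℝ, 1 ≤ ν → ∀ x : ℝ, 0 < x →
      lambdaUp2 (pathW x) = 1 / (1 + x) ∧
      lambdaUp2 (pathW (x / ν)) / lambdaUp2 (pathW x) = ν * (1 + x) / (ν + x) := by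
    intro ν hν x hx
    have hν0 : (0:ℝ) < ν := lt_of_lt_of_le one_pos hν
    have hxν : 0 < x / ν := div_pos hx hν0
    have l1 := lambdaUp2_pathW x hx
    have l2 := lambdaUp2_pathW (x / ν) hxν
    refine ⟨l1, ?_⟩
    rw [l1, l2]
    have h1 : (0:ℝ) < 1 + x := by linarith
    have h2 : (0:ℝ) < 1 + x / ν := by positivity
    have h3 : (0:ℝ) < ν + x := by linarith
    field_simp
    try ring
  refine ⟨?_, key2, ?_⟩
  · intro ν hν ε hε
    have hν0 : (0:ℝ) < ν := lt_of_lt_of_le one_pos hν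
    set x := max 1 (ν * (ν - 1) / ε) with hx_def
    have hx : 0 < x := lt_of_lt_of_le one_pos (le_max_left _ _)
    have hxν : 0 < x / ν := div_pos hx hν0
    refine ⟨x, hx, hnu ν hν x hx, ?_⟩
    have l1 := lambdaUp2_pathW x hx
    have l2 := lambdaUp2_pathW (x / ν) hxν
    rw [l1, l2, ge_iff_le]
    have h1 : (0:ℝ) < 1 + x := by linarith
    have h2 : (0:ℝ) < 1 + x / ν := by positivity
    have h3 : (0:ℝ) < ν + x := by linarith
    have hεx : ν * (ν - 1) ≤ ε * x := by
      have hm := le_max_right 1 (ν * (ν - 1) / ε)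
      calc ν * (ν - 1) = ε * (ν * (ν - 1) / ε) := by field_simp
        _ ≤ ε * x := mul_le_mul_of_nonneg_left hm hε.le
    have e : 1 / (1 + x / ν) = ν / (ν + x) := by
      rw [div_eq_div_iff h2.ne' h3.ne']
      field_simp
    rw [e, mul_one_div, div_le_div_iff₀ h1 h3]
    nlinarith [hεx, mul_pos hε hν0]
  · intro ν hν
    have hν0 : (0:ℝ) < ν := lt_of_lt_of_le one_pos hν
    have h0 : Filter.Tendsto (fun x : ℝ => ν + x) Filter.atTop Filter.atTop :=
      Filter.tendsto_atTop_add_const_left _ ν Filter.tendsto_id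
    have h1 : Filter.Tendsto (fun x : ℝ => (ν + x)⁻¹) Filter.atTop (nhds 0) :=
      h0.inv_tendsto_atTop
    have h2 : Filter.Tendsto (fun x : ℝ => ν + ν * (1 - ν) * (ν + x)⁻¹)
        Filter.atTop (nhds (ν + ν * (1 - ν) * 0)) :=
      Filter.Tendsto.add tendsto_const_nhds (h1.const_mul _)
    rw [mul_zero, add_zero] at h2
    refine Filter.Tendsto.congr' ?_ h2
    filter_upwards [Filter.eventually_gt_atTop 0] with y hy
    have h3 : (0:ℝ) < ν + y := by linarith
    field_simp
    ring
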